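/- arXiv:2101.11571 — 2 statements merged into one kernel-verified Lean document; each statement's English description precedes it below -/
import Mathlib

section
/- For all integers d ≥ 2 and 1 ≤ r ≤ n, the equality (n+1)·binom(n,r)·d^r·(d-1)^{n-r} = (n+1)·(d-1)^n·(r+1)·((n+1)(d-1)^n - 1)^r holds if and only if r = 1 and d = 2. -/
open Nat

lemma two_pow_le_two_mul_factorial (r : ℕ) : 2 ^ r ≤ 2 * r ! := by
  induction r with
  | zero => norm_num
  | succ k ih =>
    rcases Nat.eq_zero_or_pos k with h | h
    · subst h; norm_num
    · calc 2 ^ (k + 1) = 2 * 2 ^ k := by ring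
        _ ≤ 2 * (2 * k !) := by omega
        _ = 2 * 2 * k ! := by ring
        _ ≤ 2 * ((k + 1) * k !) := by
            have : 2 ≤ k + 1 := by omega
            calc 2 * 2 * k ! ≤ 2 * ((k+1) * k !) := by
                  have := Nat.mul_le_mul_right (k !) this
                  nlinarith [Nat.factorial_pos k]
        _ = 2 * (k + 1)! := by rw [Nat.factorial_succ]

lemma choose_two_pow_le (n r : ℕ) (hr2 : 2 ≤ r) :
    n.choose r * 2 ^ r ≤ 2 * n ^ r := by
  have h1 : r ! * n.choose r ≤ n ^ r := by
    rw [← Nat.descFactorial_eq_factorial_mul_choose]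
    exact Nat.descFactorial_le_pow n r
  have h2 : 2 ^ r ≤ 2 * r ! := two_pow_le_two_mul_factorial r
  have hfac : 0 < r ! := Nat.factorial_pos r
  have key : (n.choose r * 2 ^ r) * r ! ≤ (2 * n ^ r) * r ! := by
    calc (n.choose r * 2 ^ r) * r ! = (r ! * n.choose r) * 2 ^ r := by ring
      _ ≤ n ^ r * (2 * r !) := Nat.mul_le_mul h1 h2
      _ = (2 * n ^ r) * r ! := by ring
  exact Nat.le_of_mul_le_mul_right key hfac

/-- For `d ≥ 2` and `1 ≤ r ≤ n`, the degree of the mixed discriminant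
equals the degree of the iterated discriminant iff `r = 1` and `d = 2`. -/
theorem mixed_eq_iterated_iff (d n r : ℕ) (hd : 2 ≤ d) (hr : 1 ≤ r) (hrn : r ≤ n) :
    (n + 1) * n.choose r * d ^ r * (d - 1) ^ (n - r) =
      (n + 1) * (d - 1) ^ n * (r + 1) * ((n + 1) * (d - 1) ^ n - 1) ^ r ↔
    r = 1 ∧ d = 2 := by
  have hn : 1 ≤ n := hr.trans hrn
  constructor
  · intro h
    rcases eq_or_lt_of_le hd with hd2 | hd3
    · -- d = 2
      have hd2' : d = 2 := hd2.symm
      subst hd2'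
      refine ⟨?_, rfl⟩
      simp only [show (2:ℕ) - 1 = 1 from rfl, one_pow, one_mul, mul_one,
        Nat.add_sub_cancel] at h
      -- h : (n+1) * n.choose r * 2 ^ r = (n+1) * (r+1) * n ^ r
      by_contra hr1
      have hr2 : 2 ≤ r := by omega
      have hnp : 0 < n ^ r := Nat.pow_pos (n := r) hn
      have hle : n.choose r * 2 ^ r ≤ 2 * n ^ r := choose_two_pow_le n r hr2
      have hcancel : n.choose r * 2 ^ r = (r + 1) * n ^ r := by
        have hpos : 0 < n + 1 := Nat.succ_pos n
        have : (n + 1) * (n.choose r * 2 ^ r) = (n + 1) * ((r + 1) * n ^ r) := by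
          calc (n + 1) * (n.choose r * 2 ^ r) = (n+1) * n.choose r * 2 ^ r := by ring
            _ = (n+1) * (r+1) * n ^ r := h
            _ = (n + 1) * ((r + 1) * n ^ r) := by ring
        exact Nat.eq_of_mul_eq_mul_left hpos this
      have : (r + 1) * n ^ r ≥ 3 * n ^ r := Nat.mul_le_mul_right _ (by omega)
      omega
    · -- d ≥ 3 : contradiction
      exfalso
      have hd1 : 1 ≤ d - 1 := by omega
      have hdd : d ≤ 2 * (d - 1) := by omega
      set e := d - 1 with he
      have he2 : 2 ≤ e := by omega
      have hepos : 0 < e ^ n := Nat.pow_pos (n := n) (by omega)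
      have hδ : 2 * n + 1 ≤ (n + 1) * e ^ n := by
        have h2n : n + 1 ≤ 2 ^ n := Nat.lt_two_pow_self (n := n)
        have : 2 ^ n ≤ e ^ n := Nat.pow_le_pow_left he2 n
        have hen : n + 1 ≤ e ^ n := le_trans h2n this
        calc 2 * n + 1 ≤ (n + 1) * (n + 1) := by nlinarith
          _ ≤ (n + 1) * e ^ n := Nat.mul_le_mul_left _ hen
      have hδ1 : 2 * n ≤ (n + 1) * e ^ n - 1 := by omega
      -- Upper bound on LHS
      have hLHS : (n + 1) * n.choose r * d ^ r * e ^ (n - r)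
          ≤ (n + 1) * e ^ n * ((2 * n) ^ r) := by
        calc (n + 1) * n.choose r * d ^ r * e ^ (n - r)
            ≤ (n + 1) * n.choose r * (2 * e) ^ r * e ^ (n - r) := by
              apply Nat.mul_le_mul_right
              apply Nat.mul_le_mul_left
              exact Nat.pow_le_pow_left hdd r
          _ = (n + 1) * n.choose r * (2 ^ r * (e ^ r * e ^ (n - r))) := by
              rw [mul_pow]; ring
          _ = (n + 1) * n.choose r * (2 ^ r * e ^ n) := by
              rw [← pow_add, Nat.add_sub_cancel' hrn]
          _ ≤ (n + 1) * n ^ r * (2 ^ r * e ^ n) := by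
              apply Nat.mul_le_mul_right
              exact Nat.mul_le_mul_left _ (Nat.choose_le_pow n r)
          _ = (n + 1) * e ^ n * ((2 * n) ^ r) := by rw [mul_pow]; ring
      -- Lower bound on RHS
      have hRHS : (n + 1) * e ^ n * ((2 * n) ^ r) <
          (n + 1) * e ^ n * (r + 1) * ((n + 1) * e ^ n - 1) ^ r := by
        have h1 : (2 * n) ^ r ≤ ((n + 1) * e ^ n - 1) ^ r :=
          Nat.pow_le_pow_left hδ1 r
        have hpos : 0 < (n + 1) * e ^ n * ((2 * n) ^ r) := by
          apply Nat.mul_pos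
          · exact Nat.mul_pos (Nat.succ_pos n) hepos
          · exact Nat.pow_pos (n := r) (by omega)
        calc (n + 1) * e ^ n * ((2 * n) ^ r)
            < 2 * ((n + 1) * e ^ n * ((2 * n) ^ r)) := by omega
          _ ≤ (r + 1) * ((n + 1) * e ^ n * (((n + 1) * e ^ n - 1) ^ r)) := by
              apply Nat.mul_le_mul (by omega)
              exact Nat.mul_le_mul_left _ h1
          _ = (n + 1) * e ^ n * (r + 1) * ((n + 1) * e ^ n - 1) ^ r := by ring
      have := h ▸ lt_of_le_of_lt hLHS hRHS
      exact lt_irrefl _ this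
  · rintro ⟨rfl, rfl⟩
    simp only [Nat.choose_one_right, pow_one, show (2:ℕ) - 1 = 1 from rfl,
      one_pow, mul_one, Nat.add_sub_cancel]
    ring
end

section
/- For all integers d ≥ 2 and 1 ≤ r ≤ n, the ratio [(n+1)(d-1)^n(r+1)((n+1)(d-1)^n-1)^r] / [(n+1)·binom(n,r)·d^r·(d-1)^{n-r}] is at least ((d-1)^{n+1}/d)^r · (r+1)!. -/
/-- Core natural-number inequality. -/
lemma ratio_ge_nat (e n r : ℕ) (he : 1 ≤ e) (hrn : r ≤ n) :
    (e ^ (n + 1)) ^ r * Nat.factorial (r + 1) * ((n + 1) * n.choose r * e ^ (n - r)) ≤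
      (n + 1) * e ^ n * (r + 1) * ((n + 1) * e ^ n - 1) ^ r := by
  have h1 : n.choose r * Nat.factorial r ≤ n ^ r := by
    rw [mul_comm, ← Nat.descFactorial_eq_factorial_mul_choose]
    exact Nat.descFactorial_le_pow n r
  have hen : 1 ≤ e ^ n := Nat.one_le_pow _ _ (by omega)
  have h2 : n * e ^ n ≤ (n + 1) * e ^ n - 1 := by
    have h : n * e ^ n + 1 ≤ (n + 1) * e ^ n := by
      calc n * e ^ n + 1 ≤ n * e ^ n + e ^ n := Nat.add_le_add_left hen _
        _ = (n + 1) * e ^ n := by ring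
    omega
  have h3 : (n * e ^ n) ^ r ≤ ((n + 1) * e ^ n - 1) ^ r := Nat.pow_le_pow_left h2 r
  have hexp : (e ^ (n + 1)) ^ r * e ^ (n - r) = e ^ n * (e ^ n) ^ r := by
    rw [← pow_mul, ← pow_add, ← pow_mul, ← pow_add]
    congr 1
    obtain ⟨k, rfl⟩ := Nat.exists_eq_add_of_le hrn
    have : r + k - r = k := by omega
    rw [this]; ring
  calc (e ^ (n + 1)) ^ r * Nat.factorial (r + 1) * ((n + 1) * n.choose r * e ^ (n - r))
      = (n + 1) * (r + 1) * ((n.choose r * Nat.factorial r) * ((e ^ (n + 1)) ^ r * e ^ (n - r))) := by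
        rw [Nat.factorial_succ]; ring
    _ = (n + 1) * (r + 1) * ((n.choose r * Nat.factorial r) * (e ^ n * (e ^ n) ^ r)) := by
        rw [hexp]
    _ ≤ (n + 1) * (r + 1) * (n ^ r * (e ^ n * (e ^ n) ^ r)) := by
        exact Nat.mul_le_mul_left _ (Nat.mul_le_mul_right _ h1)
    _ = (n + 1) * (r + 1) * e ^ n * (n * e ^ n) ^ r := by rw [mul_pow]; ring
    _ ≤ (n + 1) * (r + 1) * e ^ n * ((n + 1) * e ^ n - 1) ^ r := Nat.mul_le_mul_left _ h3
    _ = (n + 1) * e ^ n * (r + 1) * ((n + 1) * e ^ n - 1) ^ r := by ring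

/-- Lower bound for the ratio `deg(ID)/deg(MD)` for `d ≥ 2`, `1 ≤ r ≤ n`. -/
theorem ratio_ge (d n r : ℕ) (hd : 2 ≤ d) (hr : 1 ≤ r) (hrn : r ≤ n) :
    (((n : ℚ) + 1) * ((d : ℚ) - 1) ^ n * ((r : ℚ) + 1) *
        (((n : ℚ) + 1) * ((d : ℚ) - 1) ^ n - 1) ^ r) /
      (((n : ℚ) + 1) * (n.choose r : ℚ) * (d : ℚ) ^ r * ((d : ℚ) - 1) ^ (n - r)) ≥
    (((d : ℚ) - 1) ^ (n + 1) / (d : ℚ)) ^ r * (Nat.factorial (r + 1) : ℚ) := by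
  have hd1 : 1 ≤ d := by omega
  set e := d - 1 with hedef
  have he : 1 ≤ e := by omega
  have he1 : ((d : ℚ) - 1) = ((e : ℕ) : ℚ) := by
    rw [hedef, Nat.cast_sub hd1]; norm_num
  rw [he1]
  have hpos : 0 < (n + 1) * e ^ n := Nat.mul_pos (Nat.succ_pos n) (Nat.pow_pos (by omega))
  have hsub : ((n : ℚ) + 1) * ((e : ℕ) : ℚ) ^ n - 1 = (((n + 1) * e ^ n - 1 : ℕ) : ℚ) := by
    rw [Nat.cast_sub hpos]; push_cast; ring
  rw [hsub]
  have hC : 0 < (n.choose r : ℚ) := by exact_mod_cast Nat.choose_pos hrn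
  have hdq : 0 < (d : ℚ) := by positivity
  have heq : 0 < ((e : ℕ) : ℚ) := by exact_mod_cast he
  have hn1 : 0 < (n : ℚ) + 1 := by positivity
  have hden : 0 < ((n : ℚ) + 1) * (n.choose r : ℚ) * (d : ℚ) ^ r * ((e : ℕ) : ℚ) ^ (n - r) := by
    apply mul_pos (mul_pos (mul_pos hn1 hC) (by positivity)) (by positivity)
  rw [ge_iff_le, div_pow, div_mul_eq_mul_div, div_le_div_iff₀ (by positivity) hden]
  have key := ratio_ge_nat e n r he hrn
  calc (((e : ℕ) : ℚ) ^ (n + 1)) ^ r * (Nat.factorial (r + 1) : ℚ) *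
        (((n : ℚ) + 1) * (n.choose r : ℚ) * (d : ℚ) ^ r * ((e : ℕ) : ℚ) ^ (n - r))
      = (((e ^ (n + 1)) ^ r * Nat.factorial (r + 1) * ((n + 1) * n.choose r * e ^ (n - r)) : ℕ) : ℚ)
          * (d : ℚ) ^ r := by push_cast; ring
    _ ≤ (((n + 1) * e ^ n * (r + 1) * ((n + 1) * e ^ n - 1) ^ r : ℕ) : ℚ) * (d : ℚ) ^ r := by
        apply mul_le_mul_of_nonneg_right _ (by positivity)
        exact_mod_cast key
    _ = ((n : ℚ) + 1) * ((e : ℕ) : ℚ) ^ n * ((r : ℚ) + 1) *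
          (((n + 1) * e ^ n - 1 : ℕ) : ℚ) ^ r * (d : ℚ) ^ r := by push_cast; ring
end
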